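/- In the hyperbolic plane (or in a totally geodesic plane of H³), consider a quadrilateral τ with vertices A, B, C, D where [A,B] lies on a geodesic line ℓ, the segments [A,C] and [B,D] are perpendicular to ℓ with lengths at most η, and [C,D] is a geodesic segment. Then sin(Area(τ)) ≤ sinh(η) · sinh(d(A,B)). -/

import Mathlib

open Real MeasureTheory Set

lemma int_inv_aux {s : ℝ} (hs : 0 ≤ s) : ∫ r in Icc (1:ℝ) (exp s), r⁻¹ = s := by
  rw [integral_Icc_eq_integral_Ioc, ← intervalIntegral.integral_of_le (one_le_exp hs),
    integral_inv (by rw [uIcc_of_le (one_le_exp hs)]; intro h; linarith [h.1]),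
    div_one, log_exp]

lemma int_csc_aux {η : ℝ} (hη : 0 ≤ η) :
    ∫ θ in Icc (π/2 - arctan (sinh η)) (π/2), ((sin θ)^2)⁻¹ = sinh η := by
  set a := arctan (sinh η) with ha
  have ha0 : 0 ≤ a := by
    have h := arctan_strictMono.monotone (Real.sinh_nonneg_iff.2 hη); rwa [arctan_zero] at h
  have ha2 : a < π/2 := arctan_lt_pi_div_two _
  have hle : π/2 - a ≤ π/2 := by linarith
  have hsin : ∀ x ∈ uIcc (π/2 - a) (π/2), 0 < sin x := by
    intro x hx
    rw [uIcc_of_le hle] at hx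
    exact sin_pos_of_pos_of_lt_pi (by linarith [hx.1, pi_pos]) (by linarith [hx.2, pi_pos])
  have hderiv : ∀ x ∈ uIcc (π/2 - a) (π/2),
      HasDerivAt (fun θ => -cos θ / sin θ) (((sin x)^2)⁻¹) x := by
    intro x hx
    have h := (hasDerivAt_cos x).neg.div (hasDerivAt_sin x) (hsin x hx).ne'
    refine h.congr_deriv (Eq.symm ?_)
    have := sin_sq_add_cos_sq x
    rw [Pi.neg_apply, eq_div_iff (pow_ne_zero 2 (hsin x hx).ne'), inv_mul_cancel₀ (pow_ne_zero 2 (hsin x hx).ne')]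
    ring_nf
    nlinarith [sin_sq_add_cos_sq x]
  have hcont : IntervalIntegrable (fun θ => ((sin θ)^2)⁻¹) volume (π/2 - a) (π/2) := by
    apply ContinuousOn.intervalIntegrable
    exact (continuous_sin.continuousOn.pow 2).inv₀ fun x hx => (pow_pos (hsin x hx) 2).ne'
  rw [integral_Icc_eq_integral_Ioc, ← intervalIntegral.integral_of_le hle,
    intervalIntegral.integral_eq_sub_of_hasDerivAt hderiv hcont]
  rw [cos_pi_div_two, sin_pi_div_two, cos_pi_div_two_sub, sin_pi_div_two_sub]
  have := Real.tan_arctan (sinh η)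
  rw [tan_eq_sin_div_cos] at this
  have hca : 0 < cos a := cos_arctan_pos _
  field_simp
  linarith [(div_eq_iff hca.ne').1 this]


/-- The hyperbolic area of a subset `τ` of the upper half-plane, computed with
the hyperbolic area density `1 / (Im z)²`. -/
noncomputable def hypArea (τ : Set ℂ) : ℝ := ∫ z in τ, (z.im ^ 2)⁻¹

/-- A quadrilateral `τ = ABDC` in the hyperbolic plane with `[A,B]` on a
geodesic `ℓ`, right angles at `A` and `B`, and the sides `[A,C]`, `[B,D]`
perpendicular to `ℓ` of length `≤ η`, satisfies
`sin (Area τ) ≤ sinh η · sinh (d(A,B))`.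

Normalisation by an isometry of `H²`: `ℓ` is the imaginary axis, `A = i`,
`B = e^s·i` with `s = d(A,B)`, and the perpendiculars at `A`, `B` are the
circles `|z| = 1`, `|z| = e^s`.  The points at distance `≤ η` from `ℓ`
(on the side of `C`, `D`) are those with `0 ≤ Re z ≤ sinh η · Im z`, and the
quadrilateral `τ` is contained in the region cut out by these conditions. -/
theorem stmt_7 (η s : ℝ) (hη : 0 ≤ η) (hs : 0 ≤ s) (τ : Set ℂ)
    (hτ : τ ⊆ {z : ℂ | 0 < z.im ∧ 1 ≤ ‖z‖ ∧ ‖z‖ ≤ exp s ∧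
      0 ≤ z.re ∧ z.re ≤ sinh η * z.im}) :
    sin (hypArea τ) ≤ sinh η * sinh s := by
  set R : Set ℂ := {z : ℂ | 0 < z.im ∧ 1 ≤ ‖z‖ ∧ ‖z‖ ≤ exp s ∧
      0 ≤ z.re ∧ z.re ≤ sinh η * z.im} with hR
  set g : ℂ → ℝ := fun z => (z.im ^ 2)⁻¹ with hg
  set a := arctan (sinh η) with ha
  have ha0 : 0 ≤ a := by
    have h := arctan_strictMono.monotone (Real.sinh_nonneg_iff.2 hη); rwa [arctan_zero] at h
  have ha2 : a < π/2 := arctan_lt_pi_div_two _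
  have hca : 0 < cos a := cos_arctan_pos _
  set E' : Set (ℝ × ℝ) := Icc 1 (exp s) ×ˢ Icc (π/2 - a) (π/2) with hE'def
  set F : ℝ × ℝ → ℝ := fun p => p.1⁻¹ * ((sin p.2)^2)⁻¹ with hF
  -- measurability
  have hRm : MeasurableSet R := by
    rw [hR]
    apply MeasurableSet.inter (measurableSet_lt measurable_const Complex.measurable_im)
    apply MeasurableSet.inter
      (measurableSet_le measurable_const continuous_norm.measurable)
    apply MeasurableSet.inter
      (measurableSet_le continuous_norm.measurable measurable_const)
    exact MeasurableSet.inter (measurableSet_le measurable_const Complex.measurable_re)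
      (measurableSet_le Complex.measurable_re (Complex.measurable_im.const_mul _))
  have hE'm : MeasurableSet E' := measurableSet_Icc.prod measurableSet_Icc
  -- integrability of g on R
  have hgR : IntegrableOn g R := by
    refine Measure.integrableOn_of_bounded (μ := volume) (M := cosh η ^ 2) ?_ ?_ ?_
    · refine ((measure_mono (fun z hz => ?_)).trans_lt
        (measure_closedBall_lt_top (x := (0:ℂ)) (r := exp s))).ne
      rcases hz with ⟨-, -, h2, -, -⟩
      simpa [Metric.mem_closedBall, Complex.dist_eq] using h2
    · exact (Complex.measurable_im.pow measurable_const).inv.aestronglyMeasurable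
    · refine (ae_restrict_iff' hRm).2 (ae_of_all _ fun z hz => ?_)
      rcases hz with ⟨h0, h1, -, h4, h5⟩
      have habs : 1 ≤ z.re^2 + z.im^2 := by
        have := Complex.sq_norm z
        rw [Complex.normSq_apply] at this
        nlinarith [h1]
      have hre2 : z.re ^ 2 ≤ (sinh η * z.im) ^ 2 := by nlinarith
      have him : 1 ≤ cosh η ^ 2 * z.im ^ 2 := by
        nlinarith [Real.cosh_sq η]
      have h2 : (0:ℝ) < z.im ^ 2 := by positivity
      rw [hg, Real.norm_eq_abs, abs_of_nonneg (by positivity)]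
      rw [inv_le_iff_one_le_mul₀ h2]
      nlinarith
  have hgnn : ∀ z : ℂ, 0 ≤ g z := fun z => by positivity
  -- step 1 : sin x ≤ x
  have h0 : 0 ≤ hypArea τ := integral_nonneg fun z => hgnn z
  have h1 : hypArea τ ≤ hypArea R :=
    integral_mono_measure (Measure.restrict_mono hτ le_rfl) (ae_of_all _ hgnn) hgR
  -- polar change of variables
  have h2 : hypArea R = ∫ p in polarCoord.target, p.1 • (R.indicator g) (Complex.polarCoord.symm p) := by
    rw [hypArea, ← integral_indicator hRm, ← Complex.integral_comp_polarCoord_symm]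
  -- pointwise bound on the target
  have key : ∀ p ∈ polarCoord.target, p.1 • (R.indicator g) (Complex.polarCoord.symm p)
      ≤ E'.indicator F p := by
    rintro ⟨r, θ⟩ hp
    rw [polarCoord_target] at hp
    obtain ⟨hr, hθ⟩ := hp
    simp only [mem_Ioi] at hr
    simp only [mem_Ioo] at hθ
    by_cases hmem : Complex.polarCoord.symm (r, θ) ∈ R
    · have hre : (Complex.polarCoord.symm (r, θ)).re = r * cos θ := by
        simp only [Complex.polarCoord_symm_apply]
        simp [Complex.ofReal_cos, Complex.ofReal_sin, Complex.mul_re, Complex.add_re]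
        exact Or.inl (Complex.cos_ofReal_re θ)
      have him : (Complex.polarCoord.symm (r, θ)).im = r * sin θ := by
        simp only [Complex.polarCoord_symm_apply]
        simp [Complex.ofReal_cos, Complex.ofReal_sin, Complex.mul_im, Complex.add_im]
        exact Or.inl (Complex.sin_ofReal_re θ)
      have habs : ‖Complex.polarCoord.symm (r, θ)‖ = r := by
        rw [Complex.norm_polarCoord_symm]; exact abs_of_pos hr
      have hmem' := hmem
      obtain ⟨c1, c2, c3, c4, c5⟩ := hmem'
      rw [him] at c1
      rw [habs] at c2 c3
      rw [hre] at c4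
      rw [hre, him] at c5
      have hsθ : 0 < sin θ := by nlinarith
      have hθ0 : 0 < θ := by
        by_contra h
        push_neg at h
        linarith [sin_nonpos_of_nonpos_of_neg_pi_le h hθ.1.le]
      have hθπ2 : θ ≤ π/2 := by
        by_contra h
        push_neg at h
        have hcθ : cos θ < 0 := cos_neg_of_pi_div_two_lt_of_lt h (by linarith [hθ.2, pi_pos])
        nlinarith
      have hθlo : π/2 - a ≤ θ := by
        by_contra h
        push_neg at h
        have h1 : tan a < tan (π/2 - θ) :=
          tan_lt_tan_of_lt_of_lt_pi_div_two (by linarith) (by linarith) (by linarith)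
        rw [Real.tan_arctan] at h1
        rw [tan_eq_sin_div_cos, sin_pi_div_two_sub, cos_pi_div_two_sub] at h1
        rw [lt_div_iff₀ hsθ] at h1
        nlinarith
      have hmemE' : ((r, θ) : ℝ × ℝ) ∈ E' := ⟨⟨c2, c3⟩, ⟨hθlo, hθπ2⟩⟩
      rw [indicator_of_mem hmem, indicator_of_mem hmemE']
      simp only [hg, hF, smul_eq_mul]
      rw [him, mul_pow, mul_inv]
      rw [show ((r:ℝ)^2)⁻¹ = r⁻¹ * r⁻¹ by rw [sq, mul_inv]]
      have hr' : (r:ℝ) ≠ 0 := hr.ne'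
      apply le_of_eq
      field_simp
    · rw [indicator_of_notMem hmem, smul_zero]
      exact indicator_nonneg (fun p hp => mul_nonneg (inv_nonneg.2 (le_trans zero_le_one hp.1.1))
        (inv_nonneg.2 (sq_nonneg _))) _
  -- integrability of the indicator bound
  have hFE' : IntegrableOn F E' := by
    refine Measure.integrableOn_of_bounded (μ := volume) (M := ((cos a)^2)⁻¹) ?_ ?_ ?_
    · exact ((isCompact_Icc.prod isCompact_Icc).measure_lt_top).ne
    · exact (measurable_fst.inv.mul
        ((Real.measurable_sin.comp measurable_snd).pow measurable_const).inv).aestronglyMeasurable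
    · refine (ae_restrict_iff' hE'm).2 (ae_of_all _ fun p hp => ?_)
      obtain ⟨⟨hr1, -⟩, hθ1, hθ2⟩ := hp
      have hsin : cos a ≤ sin p.2 := by
        have := sin_le_sin_of_le_of_le_pi_div_two (x := π/2 - a) (y := p.2)
          (by linarith) hθ2 hθ1
        rwa [sin_pi_div_two_sub] at this
      have hsp : 0 < sin p.2 := lt_of_lt_of_le hca hsin
      have hr0 : (0:ℝ) < p.1 := lt_of_lt_of_le one_pos hr1
      rw [hF, Real.norm_eq_abs, abs_of_nonneg (by positivity)]
      have b1 : p.1⁻¹ ≤ 1 := by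
        rw [inv_le_one_iff₀]; right; exact hr1
      have b2 : ((sin p.2)^2)⁻¹ ≤ ((cos a)^2)⁻¹ := by
        apply inv_anti₀ (by positivity)
        nlinarith
      calc p.1⁻¹ * ((sin p.2)^2)⁻¹ ≤ 1 * ((cos a)^2)⁻¹ := by
            apply mul_le_mul b1 b2 (by positivity) zero_le_one
        _ = ((cos a)^2)⁻¹ := one_mul _
  have hInd : Integrable (E'.indicator F) := hFE'.integrable_indicator hE'm
  -- comparison of integrals
  have h3 : (∫ p in polarCoord.target, p.1 • (R.indicator g) (Complex.polarCoord.symm p))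
      ≤ ∫ p in polarCoord.target, E'.indicator F p := by
    apply integral_mono_of_nonneg
    · refine (ae_restrict_iff' polarCoord.open_target.measurableSet).2
        (ae_of_all _ fun p hp => ?_)
      rw [polarCoord_target] at hp
      have : 0 ≤ (R.indicator g) (Complex.polarCoord.symm p) :=
        indicator_nonneg (fun z _ => hgnn z) _
      exact smul_nonneg (le_of_lt hp.1) this
    · exact hInd.restrict
    · exact (ae_restrict_iff' polarCoord.open_target.measurableSet).2 (ae_of_all _ key)
  have h4 : (∫ p in polarCoord.target, E'.indicator F p) ≤ ∫ p, E'.indicator F p :=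
    setIntegral_le_integral hInd (ae_of_all _ (indicator_nonneg fun p hp =>
      mul_nonneg (inv_nonneg.2 (le_trans zero_le_one hp.1.1)) (inv_nonneg.2 (sq_nonneg _))))
  have h5 : (∫ p, E'.indicator F p) = s * sinh η := by
    rw [integral_indicator hE'm]
    have heq : (∫ x in E', F x) =
        (∫ r in Icc (1:ℝ) (exp s), r⁻¹) * ∫ θ in Icc (π/2 - a) (π/2), ((sin θ)^2)⁻¹ := by
      rw [hE'def, Measure.volume_eq_prod]
      exact setIntegral_prod_mul (fun r : ℝ => r⁻¹) (fun θ : ℝ => ((sin θ)^2)⁻¹) _ _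
    rw [heq, int_inv_aux hs, int_csc_aux hη]
  have hfinal : hypArea τ ≤ s * sinh η := by
    rw [h2] at h1
    linarith
  calc sin (hypArea τ) ≤ hypArea τ := Real.sin_le h0
    _ ≤ s * sinh η := hfinal
    _ ≤ sinh η * sinh s := by
        have hss : s ≤ sinh s := Real.self_le_sinh_iff.2 hs
        have : 0 ≤ sinh η := Real.sinh_nonneg_iff.2 hη
        nlinarith
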